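/- If a graph G admits an acyclic 5-coloring (a proper 5-coloring in which the union of any two color classes induces a forest), then G has fractional vertex-arboricity at most 5/2. -/

import Mathlib

open MeasureTheory

variable {V : Type*}

/-- `φ` is a fractional `k`-arborization of `G`: each vertex gets a measurable subset of
`(0, k)` of Lebesgue measure one, and every level set induces a forest. -/
def FracArb (G : SimpleGraph V) (k : ℝ) (φ : V → Set ℝ) : Prop :=
  (∀ v, MeasurableSet (φ v)) ∧ (∀ v, φ v ⊆ Set.Ioo 0 k) ∧ (∀ v, volume (φ v) = 1) ∧
    ∀ α : ℝ, (G.induce {v | α ∈ φ v}).IsAcyclic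

/-- `G` has a fractional `k`-arborization. -/
def HasFracArb (G : SimpleGraph V) (k : ℝ) : Prop := ∃ φ, FracArb G k φ

/-- The fractional vertex-arboricity of `G`. -/
noncomputable def fva (G : SimpleGraph V) : ℝ := sInf {k : ℝ | 0 < k ∧ HasFracArb G k}

/-- The vertex-arboricity of `G`: least `k` admitting a partition into `k` forests. -/
noncomputable def va (G : SimpleGraph V) : ℕ :=
  sInf {k : ℕ | ∃ c : V → Fin k, ∀ i, (G.induce {v | c v = i}).IsAcyclic}

/-- The maximum size of a set of vertices inducing a forest in `G`. -/
noncomputable def maxIndForest (G : SimpleGraph V) [Fintype V] : ℕ :=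
  sSup {n : ℕ | ∃ S : Finset V, (G.induce (S : Set V)).IsAcyclic ∧ S.card = n}

/-- `H` is a minor of `G` (branch-set formulation). -/
def IsMinor {α : Type*} {β : Type*} (H : SimpleGraph α) (G : SimpleGraph β) : Prop :=
  ∃ f : α → Set β, (∀ a, (f a).Nonempty) ∧ (∀ a, (G.induce (f a)).Connected) ∧
    (Pairwise fun a b => Disjoint (f a) (f b)) ∧
    ∀ a b, H.Adj a b → ∃ x ∈ f a, ∃ y ∈ f b, G.Adj x y

/-- Planarity, via Wagner's theorem: no `K₅` minor and no `K₃,₃` minor. -/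
def Planar (G : SimpleGraph V) : Prop :=
  ¬ IsMinor (SimpleGraph.completeGraph (Fin 5)) G ∧
    ¬ IsMinor (completeBipartiteGraph (Fin 3) (Fin 3)) G

/-- Number of neighbors of `v` of degree at least three. -/
def effDeg (G : SimpleGraph V) [Fintype V] [DecidableRel G.Adj] (v : V) : ℕ :=
  ((G.neighborFinset v).filter fun u => 3 ≤ G.degree u).card

/-- `v` is light: effective degree at most three and degree at most five. -/
def Light (G : SimpleGraph V) [Fintype V] [DecidableRel G.Adj] (v : V) : Prop :=
  effDeg G v ≤ 3 ∧ G.degree v ≤ 5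

/-- `G` is `k`-arborically critical. -/
def ArbCritical (G : SimpleGraph V) (k : ℚ) : Prop :=
  (k : ℝ) < fva G ∧ ∀ H : G.Subgraph, H ≠ ⊤ → fva H.coe ≤ (k : ℝ)

instance (G : SimpleGraph V) [Fintype V] [DecidableRel G.Adj] (v : V) :
    Decidable (Light G v) := inferInstanceAs (Decidable (_ ∧ _))


lemma acyclic_mono' {G : SimpleGraph V} {S T : Set V} (hST : S ⊆ T)
    (h : (G.induce T).IsAcyclic) : (G.induce S).IsAcyclic := by
  intro v p hp
  let f : G.induce S →g G.induce T :=
    SimpleGraph.induceHom SimpleGraph.Hom.id (Set.mapsTo_id _ |>.mono_right hST)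
  have hinj : Function.Injective f :=
    SimpleGraph.induceHom_injective _ _ (Set.injOn_id S)
  exact h (p.map f) (hp.map hinj)

def arbInt : Fin 5 → Set ℝ
  | 0 => Set.Ioo 0 1
  | 1 => Set.Ioo 1 2
  | 2 => Set.Ioo 2 (5/2) ∪ Set.Ioo 0 (1/2)
  | 3 => Set.Ioo (1/2) (3/2)
  | 4 => Set.Ioo (3/2) (5/2)

lemma arbInt_meas (k : Fin 5) : MeasurableSet (arbInt k) := by
  fin_cases k <;> simp [arbInt] <;> exact (measurableSet_Ioo.union measurableSet_Ioo)

lemma arbInt_subset (k : Fin 5) : arbInt k ⊆ Set.Ioo 0 (5/2) := by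
  fin_cases k <;> intro x hx <;>
    simp only [arbInt, Set.mem_Ioo, Set.mem_union] at hx ⊢ <;>
    first
    | (rcases hx with ⟨a,b⟩|⟨a,b⟩ <;> constructor <;> linarith)
    | (obtain ⟨a,b⟩ := hx; constructor <;> linarith)

lemma arbInt_vol (k : Fin 5) : volume (arbInt k) = 1 := by
  fin_cases k <;>
    simp only [arbInt, Real.volume_Ioo]
  · norm_num
  · norm_num
  · rw [measure_union ?_ measurableSet_Ioo, Real.volume_Ioo, Real.volume_Ioo,
      ← ENNReal.ofReal_add (by norm_num) (by norm_num)]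
    · norm_num
    · rw [Set.disjoint_left]; rintro x ⟨a,b⟩ ⟨d,e⟩; linarith
  · norm_num
  · norm_num

lemma arbInt_pair (α : ℝ) : ∃ i j : Fin 5, ∀ k : Fin 5, α ∈ arbInt k → k = i ∨ k = j := by
  rcases lt_or_ge α (1/2) with h | h
  · refine ⟨0, 2, fun k hk => ?_⟩
    fin_cases k <;>
      simp only [arbInt, Set.mem_Ioo, Set.mem_union] at hk <;>
      first
      | tauto
      | (exfalso; rcases hk with ⟨a,b⟩|⟨a,b⟩ <;> linarith)
      | (exfalso; obtain ⟨a,b⟩ := hk; linarith)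
  rcases lt_or_ge α 1 with h1 | h1
  · refine ⟨0, 3, fun k hk => ?_⟩
    fin_cases k <;>
      simp only [arbInt, Set.mem_Ioo, Set.mem_union] at hk <;>
      first
      | tauto
      | (exfalso; rcases hk with ⟨a,b⟩|⟨a,b⟩ <;> linarith)
      | (exfalso; obtain ⟨a,b⟩ := hk; linarith)
  rcases lt_or_ge α (3/2) with h2 | h2
  · refine ⟨1, 3, fun k hk => ?_⟩
    fin_cases k <;>
      simp only [arbInt, Set.mem_Ioo, Set.mem_union] at hk <;>
      first
      | tauto
      | (exfalso; rcases hk with ⟨a,b⟩|⟨a,b⟩ <;> linarith)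
      | (exfalso; obtain ⟨a,b⟩ := hk; linarith)
  rcases lt_or_ge α 2 with h3 | h3
  · refine ⟨1, 4, fun k hk => ?_⟩
    fin_cases k <;>
      simp only [arbInt, Set.mem_Ioo, Set.mem_union] at hk <;>
      first
      | tauto
      | (exfalso; rcases hk with ⟨a,b⟩|⟨a,b⟩ <;> linarith)
      | (exfalso; obtain ⟨a,b⟩ := hk; linarith)
  · refine ⟨2, 4, fun k hk => ?_⟩
    fin_cases k <;>
      simp only [arbInt, Set.mem_Ioo, Set.mem_union] at hk <;>
      first
      | tauto
      | (exfalso; rcases hk with ⟨a,b⟩|⟨a,b⟩ <;> linarith)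
      | (exfalso; obtain ⟨a,b⟩ := hk; linarith)

/-- A graph with an acyclic 5-coloring has fractional vertex-arboricity at most `5/2`. -/
theorem stmt2 (G : SimpleGraph V) (c : V → Fin 5)
    (hproper : ∀ u v, G.Adj u v → c u ≠ c v)
    (hacyclic : ∀ i j : Fin 5, (G.induce {v | c v = i ∨ c v = j}).IsAcyclic) :
    fva G ≤ 5 / 2 := by
  have hmem : (5/2 : ℝ) ∈ {k : ℝ | 0 < k ∧ HasFracArb G k} := by
    refine ⟨by norm_num, fun v => arbInt (c v), fun v => arbInt_meas _,
      fun v => arbInt_subset _, fun v => arbInt_vol _, fun α => ?_⟩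
    obtain ⟨i, j, hij⟩ := arbInt_pair α
    exact acyclic_mono' (fun v hv => hij _ hv) (hacyclic i j)
  have : fva G ≤ 5/2 := csInf_le ⟨0, fun x hx => le_of_lt hx.1⟩ hmem
  linarith
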